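/- Let (Ω, P) be a probability space with events A, R, Z such that P(R ∩ Z) > 0, P(R) > 0, P(Z) > 0. If P(A ∩ R | Z) = P(A ∩ R) (bounded effort) and P(R | Z) = P(R) (demographic parity), then P(A | R ∩ Z) = P(A | R) (equal improvability). -/
import Mathlib


open MeasureTheory ProbabilityTheory

/-- BE ∧ DP ⇒ EI (Theorem 1, direction 3). -/
theorem be_and_dp_implies_ei {Ω : Type*} [MeasurableSpace Ω] (P : Measure Ω)
    [IsProbabilityMeasure P] (A R Z : Set Ω)
    (hA : MeasurableSet A) (hR : MeasurableSet R) (hZ : MeasurableSet Z)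
    (hRZ : 0 < P (R ∩ Z)) (hRpos : 0 < P R) (hZpos : 0 < P Z)
    (hBE : (P[|Z]) (A ∩ R) = P (A ∩ R))
    (hDP : (P[|Z]) R = P R) :
    (P[|R ∩ Z]) A = (P[|R]) A := by
  rw [cond_apply hZ] at hBE hDP
  rw [cond_apply (hR.inter hZ), cond_apply hR]
  have hZne : P Z ≠ 0 := hZpos.ne'
  have hZtop : P Z ≠ ⊤ := measure_ne_top P Z
  have hRtop : P R ≠ ⊤ := measure_ne_top P R
  have hDP' : P (Z ∩ R) = P Z * P R := by
    rw [← hDP, ← mul_assoc, ENNReal.mul_inv_cancel hZne hZtop, one_mul]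
  have hBE' : P (Z ∩ (A ∩ R)) = P Z * P (A ∩ R) := by
    rw [← hBE, ← mul_assoc, ENNReal.mul_inv_cancel hZne hZtop, one_mul]
  have h1 : P (R ∩ Z) = P Z * P R := by rw [Set.inter_comm]; exact hDP'
  have h2 : P (R ∩ Z ∩ A) = P Z * P (R ∩ A) := by
    have : R ∩ Z ∩ A = Z ∩ (A ∩ R) := by ext x; simp [and_comm, and_assoc, and_left_comm]
    rw [this, hBE', Set.inter_comm]
  rw [h1, h2, ENNReal.mul_inv (Or.inl hZne) (Or.inl hZtop), mul_assoc,
    ← mul_assoc (P R)⁻¹, mul_comm (P R)⁻¹ (P Z), ← mul_assoc, ← mul_assoc,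
    ENNReal.inv_mul_cancel hZne hZtop, one_mul]
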